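/- Let 0 < α < 1/2. Let u₀ : ℝ → ℝ be C¹ and 2π-periodic, and suppose there exist points x₁ < x₂ with u₀(x₁) > u₀(x₂) > 0. Then there exists λ₀ > 0 such that for every λ ∈ (0, λ₀) there is no global C¹ solution u : [1,∞) × ℝ → ℝ of the dust equation, 2π-periodic in x, with initial data u(1,·) = λ·u₀. Consequently, the quiet dust solution u ≡ 0 is unstable: there is a sequence of arbitrarily small C¹ initial data whose solutions develop singularities in finite time. -/

import Mathlib

open Set Real Filter MeasureTheory intervalIntegral

lemma sqrt_pos_aux {A y : ℝ} (hA : 0 ≤ A) : 0 < Real.sqrt (A * y ^ 2 + 1) := by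
  apply Real.sqrt_pos.2; positivity

lemma one_le_sqrt_aux {A y : ℝ} (hA : 0 ≤ A) : 1 ≤ Real.sqrt (A * y ^ 2 + 1) := by
  have h : (1:ℝ) ≤ A * y ^ 2 + 1 := by nlinarith [mul_nonneg hA (sq_nonneg y)]
  calc (1:ℝ) = Real.sqrt 1 := by simp
    _ ≤ _ := Real.sqrt_le_sqrt h

lemma hasDerivAt_v (A : ℝ) (hA : 0 ≤ A) (y : ℝ) :
    HasDerivAt (fun z => z / Real.sqrt (A * z ^ 2 + 1))
      (((Real.sqrt (A * y ^ 2 + 1))⁻¹) ^ 3) y := by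
  have hq : HasDerivAt (fun z : ℝ => A * z ^ 2 + 1) (A * (2 * y)) y := by
    simpa using (((hasDerivAt_pow 2 y).const_mul A).add_const 1)
  have hpos : 0 < A * y ^ 2 + 1 := by positivity
  have hs : HasDerivAt (fun z => Real.sqrt (A * z ^ 2 + 1))
      (1 / (2 * Real.sqrt (A * y ^ 2 + 1)) * (A * (2 * y))) y :=
    (Real.hasDerivAt_sqrt hpos.ne').comp y hq
  have hsp := sqrt_pos_aux (y := y) hA
  have hinv := hs.inv hsp.ne'
  have := (hasDerivAt_id' (x := y)).mul hinv
  have heq : ((Real.sqrt (A * y ^ 2 + 1))⁻¹) ^ 3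
      = 1 * (Real.sqrt (A * y ^ 2 + 1))⁻¹ +
        y * (-(1 / (2 * Real.sqrt (A * y ^ 2 + 1)) * (A * (2 * y))) /
          (Real.sqrt (A * y ^ 2 + 1)) ^ 2) := by
    have h2 : (Real.sqrt (A * y ^ 2 + 1)) ^ 2 = A * y ^ 2 + 1 :=
      Real.sq_sqrt hpos.le
    field_simp
    nlinarith [hsp, h2]
  rw [heq]
  simpa [div_eq_mul_inv, Pi.mul_def] using this

lemma v_lip (A : ℝ) (hA : 0 ≤ A) (a b : ℝ) :
    |a / Real.sqrt (A * a ^ 2 + 1) - b / Real.sqrt (A * b ^ 2 + 1)| ≤ |a - b| := by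
  have := Convex.norm_image_sub_le_of_norm_hasDerivWithin_le
    (f := fun z => z / Real.sqrt (A * z ^ 2 + 1))
    (f' := fun z => ((Real.sqrt (A * z ^ 2 + 1))⁻¹) ^ 3) (C := 1)
    (fun y _ => (hasDerivAt_v A hA y).hasDerivWithinAt)
    (fun y _ => by
      have h1 := one_le_sqrt_aux (A := A) (y := y) hA
      have h0 := sqrt_pos_aux (A := A) (y := y) hA
      rw [Real.norm_eq_abs, abs_of_nonneg (by positivity)]
      calc ((Real.sqrt (A * y ^ 2 + 1))⁻¹) ^ 3 ≤ 1 ^ 3 := by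
            apply pow_le_pow_left₀ (by positivity)
            exact inv_le_one_of_one_le₀ h1
        _ = 1 := one_pow 3)
    convex_univ (mem_univ b) (mem_univ a)
  simpa [Real.norm_eq_abs] using this

lemma v_incr (A : ℝ) (hA0 : 0 ≤ A) (hA1 : A ≤ 1) (a b : ℝ) (hb : 0 ≤ b) (hba : b < a) :
    (a - b) * ((Real.sqrt (a ^ 2 + 1))⁻¹) ^ 3
      ≤ a / Real.sqrt (A * a ^ 2 + 1) - b / Real.sqrt (A * b ^ 2 + 1) := by
  obtain ⟨c, hc, hceq⟩ := exists_hasDerivAt_eq_slope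
    (fun z => z / Real.sqrt (A * z ^ 2 + 1))
    (fun z => ((Real.sqrt (A * z ^ 2 + 1))⁻¹) ^ 3) hba
    (fun y _ => (hasDerivAt_v A hA0 y).continuousAt.continuousWithinAt)
    (fun y _ => hasDerivAt_v A hA0 y)
  have hc2 : A * c ^ 2 + 1 ≤ a ^ 2 + 1 := by
    have h0c : 0 ≤ c := le_trans hb hc.1.le
    nlinarith [hc.1, hc.2, sq_nonneg c]
  have hsle : Real.sqrt (A * c ^ 2 + 1) ≤ Real.sqrt (a ^ 2 + 1) := Real.sqrt_le_sqrt hc2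
  have h1 : ((Real.sqrt (a ^ 2 + 1))⁻¹) ^ 3 ≤ ((Real.sqrt (A * c ^ 2 + 1))⁻¹) ^ 3 := by
    apply pow_le_pow_left₀ (by positivity)
    exact inv_anti₀ (sqrt_pos_aux hA0) hsle
  have h2 : ((Real.sqrt (a ^ 2 + 1))⁻¹) ^ 3
      ≤ (a / Real.sqrt (A * a ^ 2 + 1) - b / Real.sqrt (A * b ^ 2 + 1)) / (a - b) :=
    hceq ▸ h1
  rw [le_div_iff₀ (by linarith)] at h2
  linarith

/-- The dust equation `∂ₜu + (√(t^{2α}u² + 1))⁻¹·u·∂ₓu = −2α·t⁻¹·u` holding for all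
times `t` in the set `s` (and all `x`). -/
def IsDustSolutionOn (α : ℝ) (s : Set ℝ) (u : ℝ → ℝ → ℝ) : Prop :=
  ∀ t ∈ s, ∀ x : ℝ,
    deriv (fun s' => u s' x) t
      + (Real.sqrt (t ^ (2 * α) * (u t x) ^ 2 + 1))⁻¹ * u t x * deriv (u t) x
      = -(2 * α) * t⁻¹ * u t x

set_option maxHeartbeats 2000000 in
/-- Instability of the quiet dust solution for `0 < α < 1/2`: for any non-monotone profile
`u₀` as below, all sufficiently small rescalings `λ·u₀` launch solutions of the dust
equation that fail to exist globally in `C¹`. -/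
theorem dust_instability_slow_expansion (α : ℝ) (hα0 : 0 < α) (hα1 : α < 1 / 2)
    (u₀ : ℝ → ℝ) (hu₀ : ContDiff ℝ 1 u₀) (hper : ∀ x, u₀ (x + 2 * Real.pi) = u₀ x)
    (x₁ x₂ : ℝ) (hx : x₁ < x₂) (h₁ : u₀ x₂ < u₀ x₁) (h₂ : 0 < u₀ x₂) :
    ∃ lam₀ > (0:ℝ), ∀ lam : ℝ, 0 < lam → lam < lam₀ →
      ¬ ∃ u : ℝ → ℝ → ℝ,
          ContDiffOn ℝ 1 (fun p : ℝ × ℝ => u p.1 p.2) (Set.Ici 1 ×ˢ Set.univ)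
          ∧ (∀ t x, u t (x + 2 * Real.pi) = u t x)
          ∧ (∀ x, u 1 x = lam * u₀ x)
          ∧ IsDustSolutionOn α (Set.Ici 1) u := by
  refine ⟨1, one_pos, ?_⟩
  intro lam hlam _hlam1
  rintro ⟨u, hC1, hperu, hinit, hpde⟩
  set β : ℝ := 2 * α with hβdef
  have hβ0 : 0 < β := by positivity
  have hβ1 : β < 1 := by rw [hβdef]; linarith
  set c₁ : ℝ := lam * u₀ x₁ with hc₁def
  set c₂ : ℝ := lam * u₀ x₂ with hc₂def
  have hc₂ : 0 < c₂ := mul_pos hlam h₂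
  have hc₁₂ : c₂ < c₁ := mul_lt_mul_of_pos_left h₁ hlam
  have hc₁ : 0 < c₁ := hc₂.trans hc₁₂
  -- characteristic speed
  set g : ℝ → ℝ → ℝ := fun c s => c * s ^ (-β) / Real.sqrt (s ^ (-β) * c ^ 2 + 1) with hgdef
  have hgcont : ∀ (c s : ℝ), 0 < s → ContinuousAt (g c) s := by
    intro c s hs
    have h1 : ContinuousAt (fun s : ℝ => s ^ (-β)) s :=
      Real.continuousAt_rpow_const s _ (Or.inl hs.ne')
    have hpos : 0 < Real.sqrt (s ^ (-β) * c ^ 2 + 1) :=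
      Real.sqrt_pos.2 (by positivity)
    exact ((continuousAt_const.mul h1).div
      (Real.continuous_sqrt.continuousAt.comp
        (((h1.mul continuousAt_const)).add continuousAt_const)) hpos.ne')
  have hgint : ∀ (c a b : ℝ), 1 ≤ a → 1 ≤ b →
      IntervalIntegrable (g c) volume a b := by
    intro c a b ha hb
    apply ContinuousOn.intervalIntegrable
    intro s hs
    have hs1 : 0 < s := by
      rcases Set.mem_uIcc.1 hs with h | h <;> [linarith [h.1]; linarith [h.1]]
    exact (hgcont c s hs1).continuousWithinAt
  -- characteristics
  set φ : ℝ → ℝ → ℝ → ℝ := fun c x0 t => x0 + ∫ s in (1:ℝ)..t, g c s with hφdef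
  have hφderiv : ∀ (c x0 t : ℝ), 1 ≤ t → HasDerivAt (φ c x0) (g c t) t := by
    intro c x0 t ht
    have ht0 : 0 < t := lt_of_lt_of_le one_pos ht
    have hmeas : StronglyMeasurableAtFilter (g c) (nhds t) volume :=
      ContinuousAt.stronglyMeasurableAtFilter isOpen_Ioi
        (fun x hx => hgcont c x hx) t ht0
    exact HasDerivAt.const_add x0
      (intervalIntegral.integral_hasDerivAt_right (hgint c 1 t le_rfl ht)
        hmeas (hgcont c t ht0))
  have hφ1 : ∀ c x0 : ℝ, φ c x0 1 = x0 := by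
    intro c x0; simp [hφdef]
  -- setup for the joint function
  set U : ℝ × ℝ → ℝ := fun p => u p.1 p.2 with hUdef
  set S : Set (ℝ × ℝ) := Set.Ici 1 ×ˢ Set.univ with hSdef
  have hnhds : ∀ t x : ℝ, 1 < t → S ∈ nhds (t, x) := by
    intro t x ht
    exact Filter.mem_of_superset
      ((isOpen_Ioi.prod isOpen_univ).mem_nhds ⟨ht, trivial⟩)
      (Set.prod_mono Set.Ioi_subset_Ici_self le_rfl)
  have hUdiff : ∀ t x : ℝ, 1 < t → DifferentiableAt ℝ U (t, x) := by
    intro t x ht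
    exact ((hC1.differentiableOn one_ne_zero) (t, x) ⟨ht.le, trivial⟩).differentiableAt
      (hnhds t x ht)
  set F : ℝ → ℝ → (ℝ × ℝ) →L[ℝ] ℝ := fun t x => fderiv ℝ U (t, x) with hFdef
  have hpartt : ∀ t x : ℝ, 1 < t →
      HasDerivAt (fun s => u s x) (F t x (1, 0)) t := by
    intro t x ht
    have h1 : HasDerivAt (fun s : ℝ => (s, x)) ((1:ℝ), (0:ℝ)) t :=
      (hasDerivAt_id t).prodMk (hasDerivAt_const t x)
    exact (hUdiff t x ht).hasFDerivAt.comp_hasDerivAt t h1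
  have hpartx : ∀ t x : ℝ, 1 < t →
      HasDerivAt (u t) (F t x (0, 1)) x := by
    intro t x ht
    have h1 : HasDerivAt (fun y : ℝ => (t, y)) ((0:ℝ), (1:ℝ)) x :=
      (hasDerivAt_const x t).prodMk (hasDerivAt_id x)
    exact (hUdiff t x ht).hasFDerivAt.comp_hasDerivAt x h1
  have hpde' : ∀ t x : ℝ, 1 < t →
      F t x (1, 0) = -β * t⁻¹ * u t x
        - (Real.sqrt (t ^ β * (u t x) ^ 2 + 1))⁻¹ * u t x * F t x (0, 1) := by
    intro t x ht
    have h := hpde t (le_of_lt ht) x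
    rw [(hpartt t x ht).deriv, (hpartx t x ht).deriv] at h
    rw [← hβdef] at h
    linarith
  -- the key representation along characteristics
  have key : ∀ c x0 : ℝ, 0 < c → lam * u₀ x0 = c → ∀ T : ℝ, 1 < T →
      u T (φ c x0 T) = c * T ^ (-β) := by
    intro c x0 hc hx0 T hT
    -- bound on ∂ₓu on [1,T] × ℝ
    have hUD : UniqueDiffOn ℝ S := (uniqueDiffOn_Ici 1).prod uniqueDiffOn_univ
    have hWcont : ContinuousOn (fderivWithin ℝ U S) S :=
      hC1.continuousOn_fderivWithin hUD le_rfl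
    have hKcomp : IsCompact (Set.Icc (1:ℝ) T ×ˢ Set.Icc (0:ℝ) (2 * Real.pi)) :=
      isCompact_Icc.prod isCompact_Icc
    obtain ⟨M, hM⟩ := hKcomp.exists_bound_of_continuousOn
      (hWcont.mono (fun p hp => ⟨hp.1.1, trivial⟩))
    have hder_bound : ∀ t x : ℝ, 1 < t → t ≤ T → |deriv (u t) x| ≤ max M 0 := by
      intro t x ht htT
      have hfun : ∀ y, deriv (u t) (y + 2 * Real.pi) = deriv (u t) y := by
        intro y
        have hfe : (fun z => u t (z + 2 * Real.pi)) = u t := funext (hperu t)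
        have := deriv_comp_add_const (u t) (2 * Real.pi) y
        rw [hfe] at this
        exact this.symm
      have hperd : Function.Periodic (deriv (u t)) (2 * Real.pi) := fun y => hfun y
      obtain ⟨y, hy, hxy⟩ := hperd.exists_mem_Ico₀ (by positivity) x
      have hW : fderivWithin ℝ U S (t, y) = F t y := fderivWithin_of_mem_nhds (hnhds t y ht)
      have hval : deriv (u t) y = F t y (0, 1) := (hpartx t y ht).deriv
      have hnorm1 : ‖((0:ℝ), (1:ℝ))‖ = 1 := by simp [Prod.norm_def]
      have hle : ‖F t y (0, 1)‖ ≤ ‖F t y‖ := by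
        calc ‖F t y (0, 1)‖ ≤ ‖F t y‖ * ‖((0:ℝ), (1:ℝ))‖ := (F t y).le_opNorm _
          _ = ‖F t y‖ := by rw [hnorm1, mul_one]
      have hMy : ‖fderivWithin ℝ U S (t, y)‖ ≤ M :=
        hM (t, y) ⟨⟨ht.le, htT⟩, ⟨hy.1, hy.2.le⟩⟩
      rw [hxy, hval]
      calc |F t y (0, 1)| = ‖F t y (0, 1)‖ := (Real.norm_eq_abs _).symm
        _ ≤ ‖F t y‖ := hle
        _ ≤ M := hW ▸ hMy
        _ ≤ max M 0 := le_max_left M 0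
    set Kc : ℝ := max M 0 + β with hKcdef
    have hKc0 : 0 ≤ Kc := by positivity
    set h : ℝ → ℝ := fun t => u t (φ c x0 t) - c * t ^ (-β) with hhdef
    set h' : ℝ → ℝ := fun t =>
      (g c t - (Real.sqrt (t ^ β * (u t (φ c x0 t)) ^ 2 + 1))⁻¹ * u t (φ c x0 t))
        * deriv (u t) (φ c x0 t) - β * t⁻¹ * h t with hh'def
    -- h has derivative h'
    have hhderiv : ∀ t : ℝ, 1 < t → HasDerivAt h (h' t) t := by
      intro t ht
      have ht0 : 0 < t := lt_trans one_pos ht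
      set x' := φ c x0 t with hx'def
      have hcurve : HasDerivAt (fun s => (s, φ c x0 s)) ((1:ℝ), g c t) t :=
        (hasDerivAt_id t).prodMk (hφderiv c x0 t ht.le)
      have hu1 : HasDerivAt (fun s => u s (φ c x0 s)) (F t x' (1, g c t)) t :=
        by have := (hUdiff t x' ht).hasFDerivAt.comp_hasDerivAt t hcurve; exact this
      have hr : HasDerivAt (fun s : ℝ => c * s ^ (-β)) (c * (-β * t ^ (-β - 1))) t :=
        (Real.hasDerivAt_rpow_const (p := -β) (Or.inl ht0.ne')).const_mul c
      have hsum := hu1.sub hr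
      have hlin : F t x' (1, g c t) = F t x' (1, 0) + g c t * F t x' (0, 1) := by
        have he : ((1:ℝ), g c t) = ((1:ℝ), (0:ℝ)) + (g c t) • ((0:ℝ), (1:ℝ)) := by
          simp [Prod.ext_iff]
        rw [he, map_add, _root_.map_smul, smul_eq_mul]
      have hrpow : t ^ (-β - 1) = t ^ (-β) * t⁻¹ := by
        rw [show -β - 1 = -β + (-1) by ring, Real.rpow_add ht0, Real.rpow_neg_one]
      have hdval : deriv (u t) x' = F t x' (0, 1) := (hpartx t x' ht).deriv
      have heq : F t x' (1, g c t) - c * (-β * t ^ (-β - 1)) = h' t := by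
        have hgoal : h' t = (g c t - (Real.sqrt (t ^ β * (u t x') ^ 2 + 1))⁻¹ * u t x')
            * deriv (u t) x' - β * t⁻¹ * (u t x' - c * t ^ (-β)) := rfl
        rw [hgoal, hlin, hpde' t x' ht, hdval, hrpow]
        ring
      rw [← heq]
      exact hsum
    have hhcont : ContinuousOn h (Set.Icc 1 T) := by
      apply ContinuousOn.sub
      · have hmap : ContinuousOn (fun t => (t, φ c x0 t)) (Set.Icc 1 T) := by
          apply ContinuousOn.prodMk continuousOn_id
          intro t htmem
          exact (hφderiv c x0 t htmem.1).continuousAt.continuousWithinAt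
        exact (hC1.continuousOn).comp hmap (fun t htmem => ⟨htmem.1, trivial⟩)
      · intro t htmem
        have ht0 : (0:ℝ) < t := lt_of_lt_of_le one_pos htmem.1
        exact (continuousAt_const.mul
          (Real.continuousAt_rpow_const t _ (Or.inl ht0.ne'))).continuousWithinAt
    have hh1 : h 1 = 0 := by
      show u 1 (φ c x0 1) - c * (1:ℝ) ^ (-β) = 0
      rw [hφ1, hinit x0, hx0, Real.one_rpow, mul_one, sub_self]
    -- Grönwall from t₀ to T
    have hgron : ∀ t₀ : ℝ, t₀ ∈ Set.Ioc 1 T →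
        ‖h T‖ ≤ ‖h t₀‖ * Real.exp (Kc * T) := by
      intro t₀ ht₀
      have hfcont : ContinuousOn h (Set.Icc t₀ T) :=
        hhcont.mono (Set.Icc_subset_Icc ht₀.1.le le_rfl)
      have hfd : ∀ s ∈ Set.Ico t₀ T, HasDerivWithinAt h (h' s) (Set.Ici s) s :=
        fun s hs => (hhderiv s (lt_of_lt_of_le ht₀.1 hs.1)).hasDerivWithinAt
      have hbound : ∀ s ∈ Set.Ico t₀ T, ‖h' s‖ ≤ Kc * ‖h s‖ + 0 := by
        intro s hs
        have hs1 : 1 < s := lt_of_lt_of_le ht₀.1 hs.1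
        have hs0 : 0 < s := lt_trans one_pos hs1
        set w := u s (φ c x0 s) with hwdef
        have hA0 : (0:ℝ) ≤ s ^ β := Real.rpow_nonneg hs0.le β
        -- the transport term is Lipschitz
        have hgid : g c s = (c * s ^ (-β)) / Real.sqrt (s ^ β * (c * s ^ (-β)) ^ 2 + 1) := by
          have e1 : s ^ β * (c * s ^ (-β)) ^ 2 = s ^ (-β) * c ^ 2 := by
            have e2 : (s ^ (-β) : ℝ) ^ 2 = s ^ (-β + -β) := by
              rw [Real.rpow_add hs0, sq]
            have e3 : s ^ β * s ^ (-β + -β) = s ^ (-β) := by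
              rw [← Real.rpow_add hs0]; ring_nf
            calc s ^ β * (c * s ^ (-β)) ^ 2 = c ^ 2 * (s ^ β * (s ^ (-β)) ^ 2) := by ring
              _ = c ^ 2 * (s ^ β * s ^ (-β + -β)) := by rw [e2]
              _ = c ^ 2 * s ^ (-β) := by rw [e3]
              _ = s ^ (-β) * c ^ 2 := by ring
          rw [hgdef]
          simp only []
          rw [e1]
        have hVlip : |g c s - (Real.sqrt (s ^ β * w ^ 2 + 1))⁻¹ * w| ≤ |h s| := by
          have := v_lip (s ^ β) hA0 (c * s ^ (-β)) w
          rw [← hgid] at this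
          have hwe : w / Real.sqrt (s ^ β * w ^ 2 + 1)
              = (Real.sqrt (s ^ β * w ^ 2 + 1))⁻¹ * w := by
            rw [div_eq_mul_inv, mul_comm]
          rw [hwe] at this
          have hhs : h s = w - c * s ^ (-β) := by rw [hhdef]
          calc |g c s - (Real.sqrt (s ^ β * w ^ 2 + 1))⁻¹ * w| ≤ |c * s ^ (-β) - w| := this
            _ = |h s| := by rw [hhs, abs_sub_comm]
        have hdb : |deriv (u s) (φ c x0 s)| ≤ max M 0 :=
          hder_bound s (φ c x0 s) hs1 hs.2.le
        have hβt : β * s⁻¹ ≤ β := by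
          have : s⁻¹ ≤ 1 := by
            rw [inv_le_one_iff₀]; right; exact hs1.le
          nlinarith
        have habs : |h' s| ≤ (max M 0) * |h s| + β * |h s| := by
          rw [hh'def]
          simp only []
          calc |(g c s - (Real.sqrt (s ^ β * w ^ 2 + 1))⁻¹ * w) * deriv (u s) (φ c x0 s)
                - β * s⁻¹ * h s|
              ≤ |(g c s - (Real.sqrt (s ^ β * w ^ 2 + 1))⁻¹ * w) * deriv (u s) (φ c x0 s)|
                + |β * s⁻¹ * h s| := abs_sub _ _
            _ ≤ |h s| * (max M 0) + β * |h s| := by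
                apply add_le_add
                · rw [abs_mul]
                  apply mul_le_mul hVlip hdb (abs_nonneg _) (abs_nonneg _)
                · rw [abs_mul, abs_mul]
                  rw [abs_of_nonneg hβ0.le, abs_of_nonneg (inv_nonneg.2 hs0.le)]
                  apply mul_le_mul_of_nonneg_right _ (abs_nonneg _)
                  exact hβt
            _ = (max M 0) * |h s| + β * |h s| := by ring
        rw [Real.norm_eq_abs, Real.norm_eq_abs, add_zero, hKcdef]
        calc |h' s| ≤ (max M 0) * |h s| + β * |h s| := habs
          _ = (max M 0 + β) * |h s| := by ring
      have := norm_le_gronwallBound_of_norm_deriv_right_le hfcont hfd le_rfl hbound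
        T ⟨ht₀.2, le_rfl⟩
      rw [gronwallBound_ε0] at this
      calc ‖h T‖ ≤ ‖h t₀‖ * Real.exp (Kc * (T - t₀)) := this
        _ ≤ ‖h t₀‖ * Real.exp (Kc * T) := by
            apply mul_le_mul_of_nonneg_left _ (norm_nonneg _)
            apply Real.exp_le_exp.2
            have h0t₀ : 0 < t₀ := lt_trans one_pos ht₀.1
            nlinarith
    -- pass to the limit t₀ → 1⁺
    have hTnorm : ‖h T‖ ≤ 0 := by
      have hev : ∀ᶠ t₀ in nhdsWithin 1 (Set.Ioi 1),
          ‖h T‖ ≤ ‖h t₀‖ * Real.exp (Kc * T) := by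
        filter_upwards [Ioc_mem_nhdsGT_of_mem (Set.left_mem_Ico.2 hT)] with t₀ ht₀
        exact hgron t₀ ht₀
      have hle : nhdsWithin (1:ℝ) (Set.Ioi 1) ≤ nhdsWithin 1 (Set.Icc 1 T) := by
        rw [← nhdsWithin_inter_of_mem' (t := Set.Icc 1 T)]
        · exact nhdsWithin_mono _ (Set.inter_subset_right)
        · exact Filter.mem_of_superset (Ioc_mem_nhdsGT_of_mem (Set.left_mem_Ico.2 hT))
            Set.Ioc_subset_Icc_self
      have hcont1 : Filter.Tendsto h (nhdsWithin 1 (Set.Icc 1 T)) (nhds (h 1)) :=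
        hhcont 1 ⟨le_rfl, hT.le⟩
      have htend : Filter.Tendsto (fun t₀ => ‖h t₀‖ * Real.exp (Kc * T))
          (nhdsWithin 1 (Set.Ioi 1)) (nhds (‖h 1‖ * Real.exp (Kc * T))) :=
        (((hcont1.mono_left hle).norm).mul_const _)
      rw [hh1, norm_zero, zero_mul] at htend
      exact ge_of_tendsto htend hev
    have := le_antisymm hTnorm (norm_nonneg _)
    have hT0 : u T (φ c x0 T) - c * T ^ (-β) = 0 := norm_eq_zero.1 this
    linarith
  -- comparison of characteristics and crossing
  set δ : ℝ := (c₁ - c₂) * ((Real.sqrt (c₁ ^ 2 + 1))⁻¹) ^ 3 with hδdef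
  have hδ0 : 0 < δ := by
    have := sqrt_pos_aux (A := (1:ℝ)) (y := c₁)
    apply mul_pos (by linarith)
    apply pow_pos
    apply inv_pos.2
    apply Real.sqrt_pos.2
    positivity
  have hglower : ∀ s : ℝ, 1 ≤ s → δ * s ^ (-β) ≤ g c₁ s - g c₂ s := by
    intro s hs
    have hs0 : 0 < s := lt_of_lt_of_le one_pos hs
    have hA0 : (0:ℝ) ≤ s ^ (-β) := Real.rpow_nonneg hs0.le _
    have hA1 : s ^ (-β) ≤ 1 :=
      Real.rpow_le_one_of_one_le_of_nonpos hs (by linarith)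
    have hv := v_incr (s ^ (-β)) hA0 hA1 c₁ c₂ hc₂.le hc₁₂
    have heq : s ^ (-β) * (c₁ / Real.sqrt (s ^ (-β) * c₁ ^ 2 + 1)
        - c₂ / Real.sqrt (s ^ (-β) * c₂ ^ 2 + 1)) = g c₁ s - g c₂ s := by
      rw [hgdef]; ring
    calc δ * s ^ (-β) = s ^ (-β) * ((c₁ - c₂) * ((Real.sqrt (c₁ ^ 2 + 1))⁻¹) ^ 3) := by
          rw [hδdef]; ring
      _ ≤ s ^ (-β) * (c₁ / Real.sqrt (s ^ (-β) * c₁ ^ 2 + 1)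
          - c₂ / Real.sqrt (s ^ (-β) * c₂ ^ 2 + 1)) :=
        mul_le_mul_of_nonneg_left hv hA0
      _ = g c₁ s - g c₂ s := heq
  -- pick a crossing time
  have hrint : ∀ T : ℝ, 1 ≤ T → IntervalIntegrable (fun s : ℝ => δ * s ^ (-β)) volume 1 T := by
    intro T hT
    apply ContinuousOn.intervalIntegrable
    intro s hs
    have hs1 : 0 < s := by
      rcases Set.mem_uIcc.1 hs with h | h <;> [linarith [h.1]; linarith [h.1]]
    exact (continuousAt_const.mul
      (Real.continuousAt_rpow_const s _ (Or.inl hs1.ne'))).continuousWithinAt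
  have hIlower : ∀ T : ℝ, 1 ≤ T →
      δ * ((T ^ (1 - β) - 1) / (1 - β)) ≤ ∫ s in (1:ℝ)..T, (g c₁ s - g c₂ s) := by
    intro T hT
    have hint1 : ∫ s in (1:ℝ)..T, δ * s ^ (-β) = δ * ((T ^ (1 - β) - 1) / (1 - β)) := by
      rw [intervalIntegral.integral_const_mul, integral_rpow (Or.inl (by linarith))]
      rw [Real.one_rpow]
      ring_nf
    rw [← hint1]
    apply intervalIntegral.integral_mono_on hT (hrint T hT)
      ((hgint c₁ 1 T le_rfl hT).sub (hgint c₂ 1 T le_rfl hT))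
    intro s hs
    exact hglower s hs.1
  obtain ⟨T, hTbig, hT1⟩ : ∃ T : ℝ, 1 + (1 - β) * ((x₂ - x₁) + 1) / δ < T ^ (1 - β) ∧ 1 < T := by
    have ht := tendsto_rpow_atTop (y := 1 - β) (by linarith)
    have := (ht.eventually_gt_atTop (1 + (1 - β) * ((x₂ - x₁) + 1) / δ)).and
      (eventually_gt_atTop (1:ℝ))
    obtain ⟨T, hT⟩ := this.exists
    exact ⟨T, hT.1, hT.2⟩
  -- D T > 0
  set D : ℝ → ℝ := fun t => φ c₁ x₁ t - φ c₂ x₂ t with hDdef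
  have hDT : 0 < D T := by
    have hIdiff : D T = (x₁ - x₂) + ∫ s in (1:ℝ)..T, (g c₁ s - g c₂ s) := by
      rw [hDdef, hφdef]
      simp only []
      rw [intervalIntegral.integral_sub (hgint c₁ 1 T le_rfl hT1.le)
        (hgint c₂ 1 T le_rfl hT1.le)]
      ring
    have h1 := hIlower T hT1.le
    have h1β : 0 < 1 - β := by linarith
    have h2 : (x₂ - x₁) + 1 ≤ δ * ((T ^ (1 - β) - 1) / (1 - β)) := by
      have hstep : (1 - β) * ((x₂ - x₁) + 1) / δ ≤ T ^ (1 - β) - 1 := by linarith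
      calc (x₂ - x₁) + 1 = δ * (((1 - β) * ((x₂ - x₁) + 1) / δ) / (1 - β)) := by
            field_simp
          _ ≤ δ * ((T ^ (1 - β) - 1) / (1 - β)) := by gcongr
    rw [hIdiff]
    linarith
  -- IVT for the crossing
  have hDcont : ContinuousOn D (Set.Icc 1 T) := by
    intro t htm
    exact (((hφderiv c₁ x₁ t htm.1).sub (hφderiv c₂ x₂ t htm.1)).continuousAt).continuousWithinAt
  have hD1 : D 1 = x₁ - x₂ := by
    show φ c₁ x₁ 1 - φ c₂ x₂ 1 = x₁ - x₂
    rw [hφ1, hφ1]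
  have h0mem : (0:ℝ) ∈ Set.Icc (D 1) (D T) := ⟨by rw [hD1]; linarith, hDT.le⟩
  obtain ⟨ts, htsm, hDts⟩ := intermediate_value_Icc hT1.le hDcont h0mem
  have hts1 : 1 < ts := by
    rcases lt_or_eq_of_le htsm.1 with hlt | heq
    · exact hlt
    · exfalso; rw [← heq, hD1] at hDts; linarith
  have e1 := key c₁ x₁ hc₁ hc₁def.symm ts hts1
  have e2 := key c₂ x₂ hc₂ hc₂def.symm ts hts1
  have hφeq : φ c₁ x₁ ts = φ c₂ x₂ ts := by
    have hz : φ c₁ x₁ ts - φ c₂ x₂ ts = 0 := hDts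
    linarith
  rw [hφeq] at e1
  have hceq : c₁ * ts ^ (-β) = c₂ * ts ^ (-β) := by rw [← e1, e2]
  have hpow : (0:ℝ) < ts ^ (-β) := Real.rpow_pos_of_pos (by linarith) _
  have : c₁ = c₂ := mul_right_cancel₀ hpow.ne' hceq
  linarith
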